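/- For real z outside I_L ∪ I_R, the reflection coefficient r(z) = −i(β_L(z)² − β_R(z)²)/(β_L(z)² + β_R(z)²) satisfies |r(z)| < 1, while for z in the symmetric difference I_L Δ I_R its boundary values satisfy |r_±(z)| = 1. -/

import Mathlib

open Complex Set symmDiff Filter

lemma quarter_sq (z : ℂ) : (z ^ ((1:ℂ)/4))^2 = z ^ ((1:ℂ)/2) := by
  rcases eq_or_ne z 0 with rfl | hz
  · rw [Complex.zero_cpow (by norm_num), Complex.zero_cpow (by norm_num)]; ring
  · rw [sq, ← Complex.cpow_add _ _ hz]; norm_num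

lemma ofReal_cpow_half (u : ℝ) (hu : 0 ≤ u) :
    ((u:ℂ)) ^ ((1:ℂ)/2) = (Real.sqrt u : ℂ) := by
  rw [show ((1:ℂ)/2) = (((1/2 : ℝ) : ℝ) : ℂ) by norm_num, ← Complex.ofReal_cpow hu,
    ← Real.sqrt_eq_rpow]

lemma path_lim (x c₁ c₂ : ℝ) (h : x ≠ c₂) :
    Tendsto (fun t : ℝ => (((x:ℂ) + t*I) - c₁)/(((x:ℂ)+t*I) - c₂)) (nhds 0)
      (nhds (((x:ℂ) - c₁)/((x:ℂ) - c₂))) := by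
  have h1 : Tendsto (fun t : ℝ => ((x:ℂ) + t*I)) (nhds 0) (nhds (x:ℂ)) := by
    have hc : Continuous (fun t : ℝ => ((x:ℂ) + t*I)) :=
      continuous_const.add (Complex.continuous_ofReal.mul continuous_const)
    simpa using hc.tendsto (0:ℝ)
  have hden : ((x:ℂ) - c₂) ≠ 0 := by
    intro hc
    apply h
    have := congrArg Complex.re hc
    simpa using sub_eq_zero.mp (by exact_mod_cast hc)
  exact ((h1.sub tendsto_const_nhds).div (h1.sub tendsto_const_nhds) hden)

lemma path_im (x c₁ c₂ t : ℝ) :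
    ((((x:ℂ) + t*I) - c₁)/(((x:ℂ)+t*I) - c₂)).im
      = t*(c₁-c₂) / Complex.normSq ((x:ℂ)+t*I-(c₂:ℂ)) := by
  rw [Complex.div_im]
  simp [Complex.normSq_apply]
  ring

theorem exp_half_log_pos (y : ℝ) (hy : 0 < y) :
    Complex.exp (((Real.log y : ℂ) + Real.pi * I) * (1/2)) = (Real.sqrt y : ℂ) * I := by
  have : ((Real.log y : ℂ) + Real.pi * I) * (1/2)
      = ((Real.log y / 2 : ℝ) : ℂ) + ((Real.pi/2 : ℝ):ℂ) * I := by push_cast; ring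
  rw [this, Complex.exp_add, Complex.exp_mul_I, ← Complex.ofReal_cos, ← Complex.ofReal_sin,
    Real.cos_pi_div_two, Real.sin_pi_div_two, ← Complex.ofReal_exp,
    ← Real.log_sqrt hy.le, Real.exp_log (Real.sqrt_pos.mpr hy)]
  push_cast; ring

theorem exp_half_log_neg (y : ℝ) (hy : 0 < y) :
    Complex.exp (((Real.log y : ℂ) - Real.pi * I) * (1/2)) = -((Real.sqrt y : ℂ) * I) := by
  have : ((Real.log y : ℂ) - Real.pi * I) * (1/2)
      = ((Real.log y / 2 : ℝ) : ℂ) + ((-(Real.pi/2) : ℝ):ℂ) * I := by push_cast; ring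
  rw [this, Complex.exp_add, Complex.exp_mul_I, ← Complex.ofReal_cos, ← Complex.ofReal_sin,
    Real.cos_neg, Real.sin_neg, Real.cos_pi_div_two, Real.sin_pi_div_two,
    ← Complex.ofReal_exp, ← Real.log_sqrt hy.le, Real.exp_log (Real.sqrt_pos.mpr hy)]
  push_cast; ring

lemma sqrt_lim_pos (f : ℝ → ℂ) (l : Filter ℝ) (y : ℝ) (hy : y < 0)
    (hf : Tendsto f l (nhds (y : ℂ))) (him : ∀ᶠ t in l, 0 < (f t).im) :
    Tendsto (fun t => f t ^ ((1:ℂ)/2)) l (nhds ((Real.sqrt (-y) : ℂ) * I)) := by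
  have h1 : Tendsto f l (nhdsWithin (y:ℂ) {z : ℂ | 0 ≤ z.im}) :=
    tendsto_nhdsWithin_iff.2 ⟨hf, him.mono fun t ht => le_of_lt ht⟩
  have h2 := (Complex.tendsto_log_nhdsWithin_im_nonneg_of_re_neg_of_im_zero
    (z := (y:ℂ)) (by simpa using hy) (by simp)).comp h1
  have h3 : Tendsto (fun t => Complex.exp (Complex.log (f t) * (1/2))) l
      (nhds (Complex.exp (((Real.log (-y) : ℂ) + Real.pi * I) * (1/2)))) := by
    apply Complex.continuous_exp.continuousAt.tendsto.comp
    have habs : ‖(y:ℂ)‖ = -y := by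
      rw [Complex.norm_real, Real.norm_eq_abs, abs_of_neg hy]
    have := h2.mul_const ((1:ℂ)/2)
    rw [habs] at this
    exact this
  rw [exp_half_log_pos (-y) (by linarith)] at h3
  apply h3.congr'
  filter_upwards [him] with t ht
  rw [Complex.cpow_def_of_ne_zero (fun h0 => by simp [h0] at ht)]

lemma sqrt_lim_neg (f : ℝ → ℂ) (l : Filter ℝ) (y : ℝ) (hy : y < 0)
    (hf : Tendsto f l (nhds (y : ℂ))) (him : ∀ᶠ t in l, (f t).im < 0) :
    Tendsto (fun t => f t ^ ((1:ℂ)/2)) l (nhds (-((Real.sqrt (-y) : ℂ) * I))) := by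
  have h1 : Tendsto f l (nhdsWithin (y:ℂ) {z : ℂ | z.im < 0}) :=
    tendsto_nhdsWithin_iff.2 ⟨hf, him⟩
  have h2 := (Complex.tendsto_log_nhdsWithin_im_neg_of_re_neg_of_im_zero
    (z := (y:ℂ)) (by simpa using hy) (by simp)).comp h1
  have h3 : Tendsto (fun t => Complex.exp (Complex.log (f t) * (1/2))) l
      (nhds (Complex.exp (((Real.log (-y) : ℂ) - Real.pi * I) * (1/2)))) := by
    apply Complex.continuous_exp.continuousAt.tendsto.comp
    have habs : ‖(y:ℂ)‖ = -y := by
      rw [Complex.norm_real, Real.norm_eq_abs, abs_of_neg hy]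
    have := h2.mul_const ((1:ℂ)/2)
    rw [habs] at this
    exact this
  rw [exp_half_log_neg (-y) (by linarith)] at h3
  apply h3.congr'
  filter_upwards [him] with t ht
  rw [Complex.cpow_def_of_ne_zero (fun h0 => by simp [h0] at ht)]

lemma cpow_half_zero_lim (f : ℝ → ℂ) (l : Filter ℝ) (hf : Tendsto f l (nhds 0)) :
    Tendsto (fun t => f t ^ ((1:ℂ)/2)) l (nhds 0) := by
  rw [tendsto_zero_iff_norm_tendsto_zero]
  have hb : ∀ t, ‖f t ^ ((1:ℂ)/2)‖ ≤ Real.sqrt ‖f t‖ := by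
    intro t
    rcases eq_or_ne (f t) 0 with h0 | h0
    · simp [h0, Complex.zero_cpow (show ((1:ℂ)/2) ≠ 0 by norm_num)]
    · rw [Complex.norm_cpow_of_ne_zero h0]
      simp only [Complex.div_im, Complex.div_re]
      norm_num
      rw [Real.sqrt_eq_rpow]
  have hs : Tendsto (fun t => Real.sqrt ‖f t‖) l (nhds 0) := by
    have h0 : Tendsto (fun t => ‖f t‖) l (nhds 0) := by simpa using hf.norm
    simpa [Function.comp_def] using (Real.continuous_sqrt.tendsto 0).comp h0
  exact squeeze_zero (fun t => norm_nonneg _) hb hs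

lemma abs_r_one (c : ℂ) (β : ℝ) (hre : c.re = 0) (him : c.im ≠ 0) :
    ‖-I * (c - (β:ℂ)) / (c + (β:ℂ))‖ = 1 := by
  have h1 : ‖c - (β:ℂ)‖ = ‖c + (β:ℂ)‖ := by
    rw [Complex.norm_def, Complex.norm_def, Complex.normSq_apply, Complex.normSq_apply]
    simp [hre]
  have h2 : c + (β:ℂ) ≠ 0 := by
    intro h; apply him
    have := congrArg Complex.im h
    simpa using this
  rw [norm_div, norm_mul, h1]
  simp only [norm_neg, Complex.norm_I, one_mul]
  exact div_self (by simpa using h2)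

lemma div_identity (a b : ℂ) (hb : b ≠ 0) :
    -I * (a - b) / (a + b) = -I * (a * b⁻¹ - 1) / (a * b⁻¹ + 1) := by
  rcases eq_or_ne (a + b) 0 with h | h
  · have ha : a = -b := by linear_combination h
    rw [h, div_zero, ha]
    have h0 : -b * b⁻¹ + 1 = 0 := by field_simp; norm_num
    rw [h0, div_zero]
  · have h' : a * b⁻¹ + 1 ≠ 0 := by
      intro hc
      apply h
      have : (a * b⁻¹ + 1) * b = 0 := by rw [hc]; ring
      field_simp at this
      linear_combination this
    field_simp

lemma cpow_half_pos_lim (f : ℝ → ℂ) (l : Filter ℝ) (y : ℝ) (hy : 0 < y)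
    (hf : Tendsto f l (nhds (y:ℂ))) :
    Tendsto (fun t => f t ^ ((1:ℂ)/2)) l (nhds ((Real.sqrt y : ℝ):ℂ)) := by
  have hc : ContinuousAt (fun z : ℂ => z ^ ((1:ℂ)/2)) (y:ℂ) :=
    continuousAt_cpow_const (by rw [Complex.mem_slitPlane_iff]; left; simpa using hy)
  have := hc.tendsto.comp hf
  rwa [show ((y:ℂ)) ^ ((1:ℂ)/2) = ((Real.sqrt y : ℝ):ℂ) from ofReal_cpow_half y hy.le] at this

lemma path_im_pos (x c₁ c₂ : ℝ) (h : c₂ < c₁) {t : ℝ} (ht : 0 < t) :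
    0 < ((((x:ℂ) + t*I) - c₁)/(((x:ℂ)+t*I) - c₂)).im := by
  rw [path_im]
  apply div_pos (by nlinarith)
  rw [Complex.normSq_pos]
  intro h0
  have := congrArg Complex.im h0
  simp at this
  linarith

lemma path_im_neg (x c₁ c₂ : ℝ) (h : c₂ < c₁) {t : ℝ} (ht : t < 0) :
    ((((x:ℂ) + t*I) - c₁)/(((x:ℂ)+t*I) - c₂)).im < 0 := by
  rw [path_im]
  apply div_neg_of_neg_of_pos (by nlinarith)
  rw [Complex.normSq_pos]
  intro h0
  have := congrArg Complex.im h0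
  simp at this
  linarith

lemma path_im_ne (x c₁ c₂ : ℝ) (h : c₂ < c₁) {t : ℝ} (ht : t ≠ 0) :
    ((((x:ℂ) + t*I) - c₁)/(((x:ℂ)+t*I) - c₂)).im ≠ 0 := by
  rcases ht.lt_or_gt with h' | h'
  · exact (path_im_neg x c₁ c₂ h h').ne
  · exact (path_im_pos x c₁ c₂ h h').ne'

lemma abs_lim_one (l : Filter ℝ) [l.NeBot] (a b : ℝ → ℂ) (c : ℂ) (β : ℝ)
    (hre : c.re = 0) (him : c.im ≠ 0)
    (ha : Tendsto a l (nhds c)) (hb : Tendsto b l (nhds ((β:ℝ):ℂ)))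
    (w : ℂ) (hw : Tendsto (fun t => -I * (a t - b t)/(a t + b t)) l (nhds w)) :
    ‖w‖ = 1 := by
  have hden : c + (β:ℂ) ≠ 0 := fun h0 => him (by simpa using congrArg Complex.im h0)
  have hr : Tendsto (fun t => -I * (a t - b t)/(a t + b t)) l
      (nhds (-I * (c - (β:ℂ))/(c + (β:ℂ)))) :=
    (tendsto_const_nhds.mul (ha.sub hb)).div (ha.add hb) hden
  rw [tendsto_nhds_unique hw hr]
  exact abs_r_one c β hre him

lemma abs_lim_one' (l : Filter ℝ) [l.NeBot] (g : ℝ → ℂ)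
    (hg : Tendsto g l (nhds 0))
    (w : ℂ) (hw : Tendsto (fun t => -I * (g t - 1)/(g t + 1)) l (nhds w)) :
    ‖w‖ = 1 := by
  have hr : Tendsto (fun t => -I * (g t - 1)/(g t + 1)) l
      (nhds (-I * ((0:ℂ) - 1)/((0:ℂ) + 1))) :=
    (tendsto_const_nhds.mul (hg.sub tendsto_const_nhds)).div
      (hg.add tendsto_const_nhds) (by norm_num)
  rw [tendsto_nhds_unique hw hr]
  have : -I * ((0:ℂ) - 1)/((0:ℂ) + 1) = I := by ring
  rw [this, Complex.norm_I]

/-- The reflection coefficient `r = −i(β_L² − β_R²)/(β_L² + β_R²)` satisfies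
`|r(z)| < 1` for real `z` outside `I_L ∪ I_R`, while for `z` in the symmetric
difference `I_L Δ I_R` its boundary values from above and below the real axis
have modulus one. -/
theorem reflection_coefficient_modulus
    (lm lp : ℝ) (h1 : -1 < lm) (h2 : lm < lp) (h3 : lp < 1) :
    let βL : ℂ → ℂ := fun z => ((z - 1) / (z + 1)) ^ ((1 : ℂ)/4)
    let βR : ℂ → ℂ := fun z => ((z - (lp : ℂ)) / (z - (lm : ℂ))) ^ ((1 : ℂ)/4)
    let r : ℂ → ℂ := fun z =>
      -Complex.I * ((βL z)^2 - (βR z)^2) / ((βL z)^2 + (βR z)^2)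
    (∀ x : ℝ, x ∉ Set.Icc (-1 : ℝ) 1 → ‖r (x : ℂ)‖ < 1) ∧
    (∀ x : ℝ, x ∈ (Set.Ioo (-1 : ℝ) 1) ∆ (Set.Ioo lm lp) →
      (∀ w : ℂ,
        Filter.Tendsto (fun t : ℝ => r ((x : ℂ) + t * Complex.I))
          (nhdsWithin 0 (Set.Ioi 0)) (nhds w) → ‖w‖ = 1) ∧
      (∀ w : ℂ,
        Filter.Tendsto (fun t : ℝ => r ((x : ℂ) + t * Complex.I))
          (nhdsWithin 0 (Set.Iio 0)) (nhds w) → ‖w‖ = 1)) := by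
  intro βL βR r
  constructor
  · -- Part 1
    intro x hx
    rw [Set.mem_Icc, not_and_or, not_le, not_le] at hx
    have hu : 0 < (x-1)/(x+1) := by
      rcases hx with h | h
      · exact div_pos_iff.mpr (Or.inr ⟨by linarith, by linarith⟩)
      · exact div_pos_iff.mpr (Or.inl ⟨by linarith, by linarith⟩)
    have hv : 0 < (x-lp)/(x-lm) := by
      rcases hx with h | h
      · exact div_pos_iff.mpr (Or.inr ⟨by linarith, by linarith⟩)
      · exact div_pos_iff.mpr (Or.inl ⟨by linarith, by linarith⟩)
    have e1 : (βL (x:ℂ))^2 = ((Real.sqrt ((x-1)/(x+1)) : ℝ) : ℂ) := by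
      rw [show (βL (x:ℂ))^2 = (((x:ℂ)-1)/((x:ℂ)+1)) ^ ((1:ℂ)/2) from quarter_sq _,
        show ((x:ℂ)-1)/((x:ℂ)+1) = (((x-1)/(x+1) : ℝ) : ℂ) by push_cast; ring,
        ofReal_cpow_half _ hu.le]
    have e2 : (βR (x:ℂ))^2 = ((Real.sqrt ((x-lp)/(x-lm)) : ℝ) : ℂ) := by
      rw [show (βR (x:ℂ))^2 = (((x:ℂ)-lp)/((x:ℂ)-lm)) ^ ((1:ℂ)/2) from quarter_sq _,
        show ((x:ℂ)-lp)/((x:ℂ)-lm) = (((x-lp)/(x-lm) : ℝ) : ℂ) by push_cast; ring,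
        ofReal_cpow_half _ hv.le]
    show ‖-Complex.I * ((βL (x:ℂ))^2 - (βR (x:ℂ))^2)
      / ((βL (x:ℂ))^2 + (βR (x:ℂ))^2)‖ < 1
    rw [e1, e2]
    set A := Real.sqrt ((x-1)/(x+1)) with hA
    set B := Real.sqrt ((x-lp)/(x-lm)) with hB
    have hA0 : 0 < A := Real.sqrt_pos.mpr hu
    have hB0 : 0 < B := Real.sqrt_pos.mpr hv
    rw [show ((A:ℂ) - (B:ℂ)) = ((A - B : ℝ):ℂ) by push_cast; ring,
      show ((A:ℂ) + (B:ℂ)) = ((A + B : ℝ):ℂ) by push_cast; ring,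
      norm_div, norm_mul]
    simp only [norm_neg, Complex.norm_I, one_mul, Complex.norm_real, Real.norm_eq_abs]
    rw [abs_of_pos (by linarith : (0:ℝ) < A + B), div_lt_one (by linarith), abs_sub_lt_iff]
    constructor <;> linarith
  · -- Part 2
    intro x hx
    rw [Set.mem_symmDiff] at hx
    have hmem : (-1 < x ∧ x < 1) ∧ (x ≤ lm ∨ lp ≤ x) := by
      rcases hx with ⟨hm, hn⟩ | ⟨hm, hn⟩
      · rw [Set.mem_Ioo] at hm
        rw [Set.mem_Ioo, not_and_or, not_lt, not_lt] at hn
        exact ⟨hm, hn⟩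
      · exfalso
        rw [Set.mem_Ioo] at hm
        exact hn ⟨by linarith [hm.1], by linarith [hm.2]⟩
    obtain ⟨⟨hx1, hx2⟩, hout⟩ := hmem
    -- the left factor
    set u0 : ℝ := (x-1)/(x+1) with hu0def
    have hu0 : u0 < 0 := div_neg_of_neg_of_pos (by linarith) (by linarith)
    set α : ℝ := Real.sqrt (-u0) with hαdef
    have hα : 0 < α := Real.sqrt_pos.mpr (by linarith)
    have hLbase : Tendsto (fun t : ℝ => (((x:ℂ)+t*I) - 1)/(((x:ℂ)+t*I) + 1)) (nhds 0)
        (nhds ((u0:ℝ):ℂ)) := by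
      have h := path_lim x 1 (-1) (by intro h; rw [h] at hx1; linarith)
      rw [show ((x:ℂ) - ((1:ℝ):ℂ))/((x:ℂ) - ((-1:ℝ):ℂ)) = ((u0:ℝ):ℂ) by
        rw [hu0def]; push_cast; ring] at h
      exact h.congr (fun t => by push_cast; ring)
    have himLpos : ∀ t ∈ Set.Ioi (0:ℝ), 0 < ((((x:ℂ)+t*I) - 1)/(((x:ℂ)+t*I) + 1)).im := by
      intro t ht
      rw [show (((x:ℂ)+t*I) - 1)/(((x:ℂ)+t*I) + 1)
          = (((x:ℂ)+t*I) - ((1:ℝ):ℂ))/(((x:ℂ)+t*I) - ((-1:ℝ):ℂ)) by push_cast; ring]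
      exact path_im_pos x 1 (-1) (by norm_num) ht
    have himLneg : ∀ t ∈ Set.Iio (0:ℝ), ((((x:ℂ)+t*I) - 1)/(((x:ℂ)+t*I) + 1)).im < 0 := by
      intro t ht
      rw [show (((x:ℂ)+t*I) - 1)/(((x:ℂ)+t*I) + 1)
          = (((x:ℂ)+t*I) - ((1:ℝ):ℂ))/(((x:ℂ)+t*I) - ((-1:ℝ):ℂ)) by push_cast; ring]
      exact path_im_neg x 1 (-1) (by norm_num) ht
    have haP : Tendsto (fun t : ℝ => ((((x:ℂ)+t*I) - 1)/(((x:ℂ)+t*I) + 1)) ^ ((1:ℂ)/2))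
        (nhdsWithin 0 (Set.Ioi 0)) (nhds ((α:ℂ)*I)) :=
      sqrt_lim_pos _ _ u0 hu0 (hLbase.mono_left nhdsWithin_le_nhds)
        (eventually_nhdsWithin_of_forall himLpos)
    have haM : Tendsto (fun t : ℝ => ((((x:ℂ)+t*I) - 1)/(((x:ℂ)+t*I) + 1)) ^ ((1:ℂ)/2))
        (nhdsWithin 0 (Set.Iio 0)) (nhds (-((α:ℂ)*I))) :=
      sqrt_lim_neg _ _ u0 hu0 (hLbase.mono_left nhdsWithin_le_nhds)
        (eventually_nhdsWithin_of_forall himLneg)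
    have hpt : ∀ t : ℝ, r ((x:ℂ) + t*I) =
        -Complex.I * (((((x:ℂ)+t*I) - 1)/(((x:ℂ)+t*I) + 1)) ^ ((1:ℂ)/2)
            - ((((x:ℂ)+t*I) - lp)/(((x:ℂ)+t*I) - lm)) ^ ((1:ℂ)/2))
          / (((((x:ℂ)+t*I) - 1)/(((x:ℂ)+t*I) + 1)) ^ ((1:ℂ)/2)
            + ((((x:ℂ)+t*I) - lp)/(((x:ℂ)+t*I) - lm)) ^ ((1:ℂ)/2)) := by
      intro t
      show -Complex.I * ((βL ((x:ℂ)+t*I))^2 - (βR ((x:ℂ)+t*I))^2)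
          / ((βL ((x:ℂ)+t*I))^2 + (βR ((x:ℂ)+t*I))^2) = _
      rw [show (βL ((x:ℂ)+t*I))^2 = ((((x:ℂ)+t*I) - 1)/(((x:ℂ)+t*I) + 1)) ^ ((1:ℂ)/2)
          from quarter_sq _,
        show (βR ((x:ℂ)+t*I))^2 = ((((x:ℂ)+t*I) - lp)/(((x:ℂ)+t*I) - lm)) ^ ((1:ℂ)/2)
          from quarter_sq _]
    rcases eq_or_ne x lm with rfl | hxm
    · -- x = lm : right factor blows up
      have hQinv : Tendsto (fun t : ℝ => ((((x:ℂ)+t*I) - lp)/(((x:ℂ)+t*I) - x))⁻¹)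
          (nhds 0) (nhds 0) := by
        have h := path_lim x x lp (by intro h; rw [h] at h2; exact lt_irrefl _ h2)
        rw [show ((x:ℂ) - ((x:ℝ):ℂ))/((x:ℂ) - ((lp:ℝ):ℂ)) = (0:ℂ) by
          rw [sub_self, zero_div]] at h
        exact h.congr (fun t => by rw [inv_div])
      have hcQ : Tendsto (fun t : ℝ => ((((x:ℂ)+t*I) - lp)/(((x:ℂ)+t*I) - x))⁻¹ ^ ((1:ℂ)/2))
          (nhds 0) (nhds 0) := cpow_half_zero_lim _ _ hQinv
      have heq : ∀ t : ℝ, t ≠ 0 → r ((x:ℂ) + t*I) =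
          -Complex.I * ((((((x:ℂ)+t*I) - 1)/(((x:ℂ)+t*I) + 1)) ^ ((1:ℂ)/2)
              * ((((x:ℂ)+t*I) - lp)/(((x:ℂ)+t*I) - x))⁻¹ ^ ((1:ℂ)/2)) - 1)
            / (((((x:ℂ)+t*I) - 1)/(((x:ℂ)+t*I) + 1)) ^ ((1:ℂ)/2)
              * ((((x:ℂ)+t*I) - lp)/(((x:ℂ)+t*I) - x))⁻¹ ^ ((1:ℂ)/2) + 1) := by
        intro t ht
        have himQ : ((((x:ℂ)+t*I) - (lp:ℂ))/(((x:ℂ)+t*I) - (x:ℂ))).im ≠ 0 :=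
          path_im_ne x lp x h2 ht
        have hQ0 : (((x:ℂ)+t*I) - lp)/(((x:ℂ)+t*I) - x) ≠ 0 :=
          fun h0 => himQ (by rw [h0]; simp)
        have hb0 : ((((x:ℂ)+t*I) - lp)/(((x:ℂ)+t*I) - x)) ^ ((1:ℂ)/2) ≠ 0 := by
          rw [Complex.cpow_def_of_ne_zero hQ0]; exact Complex.exp_ne_zero _
        have harg : ((((x:ℂ)+t*I) - lp)/(((x:ℂ)+t*I) - x)).arg ≠ Real.pi :=
          fun h => himQ (Complex.arg_eq_pi_iff.mp h).2
        rw [hpt t, div_identity _ _ hb0, ← Complex.inv_cpow _ _ harg]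
      constructor
      · intro w hw
        refine abs_lim_one' (nhdsWithin 0 (Set.Ioi 0))
          (fun t : ℝ => ((((x:ℂ)+t*I) - 1)/(((x:ℂ)+t*I) + 1)) ^ ((1:ℂ)/2)
            * ((((x:ℂ)+t*I) - lp)/(((x:ℂ)+t*I) - x))⁻¹ ^ ((1:ℂ)/2)) ?_ w ?_
        · have := haP.mul (hcQ.mono_left nhdsWithin_le_nhds)
          simpa using this
        · refine Tendsto.congr' ?_ hw
          filter_upwards [self_mem_nhdsWithin] with t ht
          exact heq t (ne_of_gt ht)
      · intro w hw
        refine abs_lim_one' (nhdsWithin 0 (Set.Iio 0))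
          (fun t : ℝ => ((((x:ℂ)+t*I) - 1)/(((x:ℂ)+t*I) + 1)) ^ ((1:ℂ)/2)
            * ((((x:ℂ)+t*I) - lp)/(((x:ℂ)+t*I) - x))⁻¹ ^ ((1:ℂ)/2)) ?_ w ?_
        · have := haM.mul (hcQ.mono_left nhdsWithin_le_nhds)
          simpa using this
        · refine Tendsto.congr' ?_ hw
          filter_upwards [self_mem_nhdsWithin] with t ht
          exact heq t (ne_of_lt ht)
    · -- x ≠ lm
      set v0 : ℝ := (x-lp)/(x-lm) with hv0def
      have hv0 : 0 ≤ v0 := by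
        rcases hout with h | h
        · have hlt : x < lm := lt_of_le_of_ne h hxm
          exact le_of_lt (div_pos_iff.mpr (Or.inr ⟨by linarith, by linarith⟩))
        · exact div_nonneg (by linarith) (by linarith)
      have hQbase : Tendsto (fun t : ℝ => (((x:ℂ)+t*I) - lp)/(((x:ℂ)+t*I) - lm)) (nhds 0)
          (nhds ((v0:ℝ):ℂ)) := by
        have h := path_lim x lp lm hxm
        rwa [show ((x:ℂ) - ((lp:ℝ):ℂ))/((x:ℂ) - ((lm:ℝ):ℂ)) = ((v0:ℝ):ℂ) by
          rw [hv0def]; push_cast; ring] at h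
      have hb : Tendsto (fun t : ℝ => ((((x:ℂ)+t*I) - lp)/(((x:ℂ)+t*I) - lm)) ^ ((1:ℂ)/2))
          (nhds 0) (nhds ((Real.sqrt v0 : ℝ):ℂ)) := by
        rcases eq_or_lt_of_le hv0 with h0 | h0
        · rw [show ((Real.sqrt v0 : ℝ):ℂ) = 0 by rw [← h0, Real.sqrt_zero]; simp]
          rw [show ((v0:ℝ):ℂ) = 0 by rw [← h0]; simp] at hQbase
          exact cpow_half_zero_lim _ _ hQbase
        · exact cpow_half_pos_lim _ _ v0 h0 hQbase
      constructor
      · intro w hw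
        refine abs_lim_one (nhdsWithin 0 (Set.Ioi 0)) _ _ ((α:ℂ)*I) (Real.sqrt v0)
          (by simp) (by simpa using hα.ne') haP (hb.mono_left nhdsWithin_le_nhds) w ?_
        exact Tendsto.congr hpt hw
      · intro w hw
        refine abs_lim_one (nhdsWithin 0 (Set.Iio 0)) _ _ (-((α:ℂ)*I)) (Real.sqrt v0)
          (by simp) (by simpa using hα.ne') haM (hb.mono_left nhdsWithin_le_nhds) w ?_
        exact Tendsto.congr hpt hw
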